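/- Let N ≥ 2 and let f_q(x) ∈ ℂ(q)[[x]] be the unique power series with f_q(0) = 1 satisfying f_q(x q^{2N}) = f_q(x) · (1 − xq²)(1 − xq^{2N−2}) / ((1 − x)(1 − xq^{2N})) in ℂ(q)[[x]]. Write f_q(x) = 1 + Σ_{k≥1} f_{q,k} · x^k (1 − x)^{−k} with uniquely determined coefficients f_{q,k} ∈ ℂ(q). Then for every k ≥ 1 the rational function f_{q,k} · (q − 1)^{−k} is regular at q = 1, i.e. f_{q,k} lies in (q−1)^k · O, where O ⊂ ℂ(q) is the local ring of rational functions without pole at q = 1. -/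

import Mathlib

namespace FqReg
noncomputable section
open Polynomial

abbrev K := RatFunc ℂ

def qq : K := RatFunc.X
abbrev am : Polynomial ℂ →+* K := algebraMap (Polynomial ℂ) K

/-- `r` is `(q-1)^k` times a rational function regular at `q = 1`. -/
def Reg (k : ℕ) (r : K) : Prop :=
  ∃ a b : Polynomial ℂ, b.eval 1 ≠ 0 ∧ r * am b = (qq - 1) ^ k * am a

lemma qq_sub_one : qq - 1 = am (X - 1) := by
  simp [qq, am, RatFunc.algebraMap_X]

lemma reg_zero (k : ℕ) : Reg k 0 :=
  ⟨0, 1, by simp, by simp⟩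

lemma reg_map (p : Polynomial ℂ) : Reg 0 (am p) :=
  ⟨p, 1, by simp, by simp⟩

lemma reg_one : Reg 0 1 := by simpa using reg_map 1

lemma reg_add {k : ℕ} {r s : K} (hr : Reg k r) (hs : Reg k s) : Reg k (r + s) := by
  obtain ⟨a₁, b₁, hb₁, h₁⟩ := hr
  obtain ⟨a₂, b₂, hb₂, h₂⟩ := hs
  refine ⟨a₁ * b₂ + a₂ * b₁, b₁ * b₂, by simp [hb₁, hb₂], ?_⟩
  rw [map_mul, map_add, map_mul, map_mul]
  calc (r + s) * (am b₁ * am b₂)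
      = (r * am b₁) * am b₂ + (s * am b₂) * am b₁ := by ring
    _ = ((qq-1)^k * am a₁) * am b₂ + ((qq-1)^k * am a₂) * am b₁ := by rw [h₁, h₂]
    _ = (qq - 1) ^ k * (am a₁ * am b₂ + am a₂ * am b₁) := by ring

lemma reg_mul {j k : ℕ} {r s : K} (hr : Reg j r) (hs : Reg k s) : Reg (j + k) (r * s) := by
  obtain ⟨a₁, b₁, hb₁, h₁⟩ := hr
  obtain ⟨a₂, b₂, hb₂, h₂⟩ := hs
  refine ⟨a₁ * a₂, b₁ * b₂, by simp [hb₁, hb₂], ?_⟩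
  have : r * s * am (b₁ * b₂) = (r * am b₁) * (s * am b₂) := by
    rw [map_mul]; ring
  rw [this, h₁, h₂, map_mul, pow_add]; ring

lemma reg_neg {k : ℕ} {r : K} (hr : Reg k r) : Reg k (-r) := by
  obtain ⟨a, b, hb, h⟩ := hr
  exact ⟨-a, b, hb, by rw [map_neg, neg_mul, h]; ring⟩

lemma reg_sub {k : ℕ} {r s : K} (hr : Reg k r) (hs : Reg k s) : Reg k (r - s) := by
  simpa [sub_eq_add_neg] using reg_add hr (reg_neg hs)

lemma reg_mono {j k : ℕ} (hjk : j ≤ k) {r : K} (hr : Reg k r) : Reg j r := by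
  obtain ⟨a, b, hb, h⟩ := hr
  refine ⟨(X - 1) ^ (k - j) * a, b, hb, ?_⟩
  rw [h, map_mul, map_pow, ← qq_sub_one, ← mul_assoc, ← pow_add]
  congr 2
  omega

lemma reg_cast {j k : ℕ} (hjk : j = k) {r : K} (hr : Reg j r) : Reg k r := hjk ▸ hr

lemma reg_pow {j : ℕ} {r : K} (hr : Reg 1 r) : Reg j (r ^ j) := by
  induction j with
  | zero => simpa using reg_one
  | succ n ih => rw [pow_succ]; exact reg_cast rfl (reg_mul ih hr)

lemma reg_sum {k : ℕ} {s : Finset ℕ} {g : ℕ → K} (h : ∀ i ∈ s, Reg k (g i)) :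
    Reg k (∑ i ∈ s, g i) := by
  classical
  induction s using Finset.induction with
  | empty => simpa using reg_zero k
  | @insert _ _ hx ih =>
      rw [Finset.sum_insert hx]
      exact reg_add (h _ (Finset.mem_insert_self _ _))
        (ih fun i hi => h i (Finset.mem_insert_of_mem hi))

lemma geom_eval_ne (m : ℕ) (hm : 1 ≤ m) :
    (∑ i ∈ Finset.range m, (X : Polynomial ℂ) ^ i).eval 1 ≠ 0 := by
  simp only [Polynomial.eval_finset_sum, Polynomial.eval_pow, Polynomial.eval_X, one_pow]
  simp only [Finset.sum_const, Finset.card_range, nsmul_eq_mul, mul_one]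
  exact_mod_cast Nat.cast_ne_zero.mpr (by omega)

lemma qq_pow_sub_one_eq (m : ℕ) :
    qq ^ m - 1 = (qq - 1) * am (∑ i ∈ Finset.range m, X ^ i) := by
  have := mul_geom_sum (qq : K) m
  rw [← this]
  congr 1
  rw [map_sum]
  congr 1
  ext i
  simp [am, map_pow, qq, RatFunc.algebraMap_X]

lemma reg_qpow_sub_one (m : ℕ) : Reg 1 (qq ^ m - 1) := by
  refine ⟨∑ i ∈ Finset.range m, X ^ i, 1, by simp, ?_⟩
  rw [map_one, mul_one, pow_one, qq_pow_sub_one_eq]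

lemma reg_qq_pow (m : ℕ) : Reg 0 (qq ^ m) := by
  have := reg_map (X ^ m : Polynomial ℂ)
  rwa [map_pow, show am X = qq by simp [qq, RatFunc.algebraMap_X]] at this

lemma qq_sub_one_ne : (qq - 1 : K) ≠ 0 := by
  rw [qq_sub_one]
  apply RatFunc.algebraMap_ne_zero
  intro h
  have := congrArg (Polynomial.eval (2 : ℂ)) h
  norm_num at this

/-- division by `q^m - 1` lowers the regularity order by exactly one. -/
lemma reg_div {k m : ℕ} (hm : 1 ≤ m) {r : K}
    (h : Reg (k + 1) (r * (qq ^ m - 1))) : Reg k r := by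
  obtain ⟨a, b, hb, hh⟩ := h
  refine ⟨a, (∑ i ∈ Finset.range m, X ^ i) * b, by
      simp only [Polynomial.eval_mul]
      exact mul_ne_zero (geom_eval_ne m hm) hb, ?_⟩
  have : (qq - 1) * (r * am ((∑ i ∈ Finset.range m, X ^ i) * b)) =
      (qq - 1) * ((qq - 1) ^ k * am a) := by
    rw [map_mul, show (qq-1) * (r * (am (∑ i ∈ Finset.range m, X ^ i) * am b)) =
      (r * ((qq-1) * am (∑ i ∈ Finset.range m, X ^ i))) * am b by ring,
      ← qq_pow_sub_one_eq, hh, pow_succ]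
    ring
  exact mul_left_cancel₀ qq_sub_one_ne this

/-! ### basic objects -/

def Qh (N : ℕ) : K := qq ^ (2 * N)
def q2 : K := qq ^ 2
def q4 (N : ℕ) : K := qq ^ (2 * N - 2)
def e2 : K := q2 - 1
def e4 (N : ℕ) : K := q4 N - 1

def aa (f : PowerSeries K) : ℕ → K := fun n => PowerSeries.coeff n f

def DD (f : PowerSeries K) : ℕ → ℕ → K
  | 0, n => aa f n
  | r+1, n => DD f r n - DD f r (n-1)

lemma DD_succ (f : PowerSeries K) (r n : ℕ) :
    DD f (r+1) n = DD f r n - DD f r (n-1) := rfl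

def gen (N r n : ℕ) : K := (Qh N - 1) * ((Qh N)^(n - (r+1)) - (Qh N)^(n-1))

def phi (N : ℕ) : ℕ → ℕ → ℕ → K
  | 0, _, _ => 0
  | 1, i, _ => if i = 1 then e2 * e4 N else 0
  | (r+2), i, n => (if i = 1 then gen N (r+1) n else 0) + phi N (r+1) i n
      + (phi N (r+1) (i-1) n - phi N (r+1) (i-1) (n-1))

lemma phi_succ (N r i n : ℕ) (hr : 1 ≤ r) :
    phi N (r+1) i n = (if i = 1 then gen N r n else 0) + phi N r i n
      + (phi N r (i-1) n - phi N r (i-1) (n-1)) := by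
  obtain ⟨s, rfl⟩ : ∃ s, r = s + 1 := ⟨r - 1, by omega⟩
  rfl

lemma phi_zero_left (N r n : ℕ) : phi N r 0 n = 0 := by
  induction r using Nat.strong_induction_on generalizing n with
  | _ r ih =>
    match r with
    | 0 => rfl
    | 1 => simp [phi]
    | (s+2) =>
        have z1 := ih (s+1) (by omega)
        show (if 0 = 1 then gen N (s+1) n else 0) + phi N (s+1) 0 n
          + (phi N (s+1) (0-1) n - phi N (s+1) (0-1) (n-1)) = 0
        simp [z1]

lemma phi_gt (N r i n : ℕ) (h : r < i) : phi N r i n = 0 := by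
  induction r using Nat.strong_induction_on generalizing i n with
  | _ r ih =>
    match r with
    | 0 => rfl
    | 1 =>
        have : ¬ (i = 1) := by omega
        simp [phi, this]
    | (s+2) =>
        show (if i = 1 then gen N (s+1) n else 0) + phi N (s+1) i n
          + (phi N (s+1) (i-1) n - phi N (s+1) (i-1) (n-1)) = 0
        have h1 : ¬ (i = 1) := by omega
        have z := fun (i' n' : ℕ) (h' : s+1 < i') => ih (s+1) (by omega) i' n' h'
        rw [z i n (by omega), z (i-1) n (by omega), z (i-1) (n-1) (by omega)]
        simp [h1]

def TT (N : ℕ) (f : PowerSeries K) (r n : ℕ) : K :=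
  ((Qh N)^n - 1) * DD f r n - Qh N * ((Qh N)^(n - (r+1)) - 1) * DD f r (n-1)

lemma T_step (N : ℕ) (f : PowerSeries K) (r m : ℕ) :
    TT N f (r+1) (r+2+m) = TT N f r (r+2+m) - TT N f r (r+1+m)
      + gen N r (r+2+m) * DD f r (r+1+m) := by
  have h1 : r+2+m - (r+1+1) = m := by omega
  have h2 : r+2+m - (r+1) = m+1 := by omega
  have h3 : r+2+m - 1 = r+1+m := by omega
  have h4 : r+1+m - (r+1) = m := by omega
  have h5 : r+1+m - 1 = r+m := by omega
  rw [TT, TT, TT, gen, DD_succ, DD_succ, h1, h2, h3, h4, h5]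
  have w1 : (Qh N)^(r+2+m) = (Qh N)^(r+m) * (Qh N)^2 := by
    rw [← pow_add]; congr 1; omega
  have w2 : (Qh N)^(r+1+m) = (Qh N)^(r+m) * (Qh N) := by
    rw [show r+1+m = (r+m)+1 by omega, pow_succ]
  have w3 : (Qh N)^(m+1) = (Qh N)^m * Qh N := by rw [pow_succ]
  rw [w1, w2, w3]
  ring


/-! ### extraction of the recursion from the functional equation -/

section Extract

variable (N : ℕ) (f : PowerSeries K)

variable (hN : 2 ≤ N)
  (hfun : PowerSeries.rescale ((RatFunc.X : RatFunc ℂ) ^ (2 * N)) f =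
      f * ((1 - PowerSeries.C ((RatFunc.X : RatFunc ℂ) ^ 2) *
              PowerSeries.X) *
           (1 - PowerSeries.C ((RatFunc.X : RatFunc ℂ) ^ (2 * N - 2)) *
              PowerSeries.X) *
           (1 - PowerSeries.X)⁻¹ *
           (1 - PowerSeries.C ((RatFunc.X : RatFunc ℂ) ^ (2 * N)) *
              PowerSeries.X)⁻¹))

include hfun in
lemma mult_eq :
    (PowerSeries.rescale (Qh N) f) * ((1 - PowerSeries.C (Qh N) * PowerSeries.X) *
        (1 - PowerSeries.X)) =
      f * ((1 - PowerSeries.C (q2) * PowerSeries.X) *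
        (1 - PowerSeries.C (q4 N) * PowerSeries.X)) := by
  have h1 : (1 - PowerSeries.X : PowerSeries K)⁻¹ * (1 - PowerSeries.X) = 1 := by
    apply PowerSeries.inv_mul_cancel
    simp
  have h2 : (1 - PowerSeries.C ((RatFunc.X : RatFunc ℂ) ^ (2*N)) * PowerSeries.X)⁻¹ *
      (1 - PowerSeries.C ((RatFunc.X : RatFunc ℂ) ^ (2*N)) * PowerSeries.X) = 1 := by
    apply PowerSeries.inv_mul_cancel
    simp
  rw [show (Qh N : K) = (RatFunc.X : RatFunc ℂ) ^ (2*N) from rfl, hfun]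
  rw [show (q2 : K) = (RatFunc.X : RatFunc ℂ) ^ 2 from rfl,
      show (q4 N : K) = (RatFunc.X : RatFunc ℂ) ^ (2*N-2) from rfl]
  calc f * ((1 - PowerSeries.C (RatFunc.X ^ 2) * PowerSeries.X) *
           (1 - PowerSeries.C (RatFunc.X ^ (2 * N - 2)) * PowerSeries.X) *
           (1 - PowerSeries.X)⁻¹ *
           (1 - PowerSeries.C (RatFunc.X ^ (2 * N)) * PowerSeries.X)⁻¹) *
        ((1 - PowerSeries.C (RatFunc.X ^ (2*N)) * PowerSeries.X) * (1 - PowerSeries.X))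
      = f * ((1 - PowerSeries.C (RatFunc.X ^ 2) * PowerSeries.X) *
           (1 - PowerSeries.C (RatFunc.X ^ (2 * N - 2)) * PowerSeries.X)) *
        (((1 - PowerSeries.X)⁻¹ * (1 - PowerSeries.X)) *
         ((1 - PowerSeries.C (RatFunc.X ^ (2*N)) * PowerSeries.X)⁻¹ *
          (1 - PowerSeries.C (RatFunc.X ^ (2*N)) * PowerSeries.X))) := by ring
    _ = f * ((1 - PowerSeries.C (RatFunc.X ^ 2) * PowerSeries.X) *
           (1 - PowerSeries.C (RatFunc.X ^ (2 * N - 2)) * PowerSeries.X)) := by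
        rw [h1, h2]; ring

include hfun in
lemma coeff_rec (n : ℕ) :
    (Qh N)^(n+2) * aa f (n+2) - (Qh N)^(n+1) * aa f (n+1)
      - Qh N * ((Qh N)^(n+1) * aa f (n+1)) + Qh N * ((Qh N)^n * aa f n)
    = aa f (n+2) - q2 * aa f (n+1) - q4 N * aa f (n+1) + q2 * (q4 N * aa f n) := by
  have h := congrArg (fun g => PowerSeries.coeff (n+2) g) (mult_eq N f hfun)
  have expandL : (PowerSeries.rescale (Qh N) f) * ((1 - PowerSeries.C (Qh N) * PowerSeries.X) *
        (1 - PowerSeries.X)) =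
      (PowerSeries.rescale (Qh N) f)
        - (PowerSeries.rescale (Qh N) f) * PowerSeries.X
        - PowerSeries.C (Qh N) * ((PowerSeries.rescale (Qh N) f) * PowerSeries.X)
        + PowerSeries.C (Qh N) * (((PowerSeries.rescale (Qh N) f) * PowerSeries.X) * PowerSeries.X) := by
    ring
  have expandR : f * ((1 - PowerSeries.C (q2) * PowerSeries.X) *
        (1 - PowerSeries.C (q4 N) * PowerSeries.X)) =
      f - PowerSeries.C (q2) * (f * PowerSeries.X) - PowerSeries.C (q4 N) * (f * PowerSeries.X)
        + PowerSeries.C (q2) * (PowerSeries.C (q4 N) * ((f * PowerSeries.X) * PowerSeries.X)) := by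
    ring
  rw [expandL, expandR] at h
  simp only [map_add, map_sub, PowerSeries.coeff_C_mul] at h
  rw [show n + 2 = (n+1) + 1 from rfl] at h
  simp only [PowerSeries.coeff_succ_mul_X] at h
  rw [show n + 1 + 1 = (n) + 1 + 1 from rfl] at h
  simp only [PowerSeries.coeff_succ_mul_X, PowerSeries.coeff_rescale] at h
  simpa [aa] using h

include hfun in
lemma coeff_rec1 :
    Qh N * aa f 1 - aa f 0 - Qh N * aa f 0
    = aa f 1 - q2 * aa f 0 - q4 N * aa f 0 := by
  have h := congrArg (fun g => PowerSeries.coeff 1 g) (mult_eq N f hfun)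
  have expandL : (PowerSeries.rescale (Qh N) f) * ((1 - PowerSeries.C (Qh N) * PowerSeries.X) *
        (1 - PowerSeries.X)) =
      (PowerSeries.rescale (Qh N) f)
        - (PowerSeries.rescale (Qh N) f) * PowerSeries.X
        - PowerSeries.C (Qh N) * ((PowerSeries.rescale (Qh N) f) * PowerSeries.X)
        + PowerSeries.C (Qh N) * (((PowerSeries.rescale (Qh N) f) * PowerSeries.X) * PowerSeries.X) := by
    ring
  have expandR : f * ((1 - PowerSeries.C (q2) * PowerSeries.X) *
        (1 - PowerSeries.C (q4 N) * PowerSeries.X)) =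
      f - PowerSeries.C (q2) * (f * PowerSeries.X) - PowerSeries.C (q4 N) * (f * PowerSeries.X)
        + PowerSeries.C (q2) * (PowerSeries.C (q4 N) * ((f * PowerSeries.X) * PowerSeries.X)) := by
    ring
  rw [expandL, expandR] at h
  simp only [map_add, map_sub, PowerSeries.coeff_C_mul] at h
  rw [show (1 : ℕ) = 0 + 1 from rfl] at h
  simp only [PowerSeries.coeff_succ_mul_X, PowerSeries.coeff_zero_mul_X,
    PowerSeries.coeff_rescale] at h
  simpa [aa] using h

include hN in
lemma hQ24 : q2 * q4 N = Qh N := by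
  rw [q2, q4, Qh, ← pow_add]
  congr 1
  omega

variable (hf0 : PowerSeries.constantCoeff f = 1)

include hf0 in
lemma aa_zero : aa f 0 = 1 := by
  simpa [aa, PowerSeries.coeff_zero_eq_constantCoeff] using hf0

include hN hfun hf0 in
lemma rec_base : (Qh N - 1) * aa f 1 = e2 * e4 N := by
  have h := coeff_rec1 N f hfun
  rw [aa_zero f hf0] at h
  have hq := hQ24 N hN
  rw [e2, e4]
  rw [← hq] at h ⊢
  linear_combination h

include hN hfun in
lemma rec_delta (m : ℕ) :
    ((Qh N)^(m+2) - 1) * (aa f (m+2) - aa f (m+1))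
      = e2 * e4 N * aa f (m+1) + Qh N * ((Qh N)^m - 1) * (aa f (m+1) - aa f m) := by
  have h := coeff_rec N f hfun m
  have hq := hQ24 N hN
  rw [e2, e4]
  rw [← hq] at h ⊢
  linear_combination h

include hN hfun in
lemma rec_plain (m : ℕ) :
    ((Qh N)^(m+2) - 1) * aa f (m+2)
      = (((Qh N)^(m+2) - 1) + ((Qh N)^(m+1) - 1) - (q2 - 1) - (q4 N - 1)) * aa f (m+1)
        - Qh N * ((Qh N)^m - 1) * aa f m := by
  have h := coeff_rec N f hfun m
  have hq := hQ24 N hN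
  rw [← hq] at h ⊢
  linear_combination h

include hN hfun in
lemma rel : ∀ r, 1 ≤ r → ∀ n, r+1 ≤ n →
    TT N f r n = ∑ i ∈ Finset.range (r+1), phi N r i n * DD f (r-i) (n-i) := by
  intro r
  induction r with
  | zero => omega
  | succ r ih =>
    intro _ n hn
    rcases Nat.eq_zero_or_pos r with hr0 | hr
    · -- base case r+1 = 1
      subst hr0
      obtain ⟨m, rfl⟩ : ∃ m, n = m + 2 := ⟨n - 2, by omega⟩
      rw [Finset.sum_range_succ, Finset.sum_range_one, phi_zero_left]
      have hp : phi N 1 1 (m+2) = e2 * e4 N := by simp [phi]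
      rw [hp]
      rw [show (1:ℕ)-1 = 0 by rfl, show m+2-1 = m+1 by omega, TT,
        show m+2 - (1+1) = m by omega, DD_succ,
        show m+2-1 = m+1 by omega, DD_succ, show m+1-1 = m by omega]
      have hrd := rec_delta N f hN hfun m
      show ((Qh N)^(m+2) - 1) * (DD f 0 (m+2) - DD f 0 (m+1))
          - Qh N * ((Qh N)^m - 1) * (DD f 0 (m+1) - DD f 0 m)
          = 0 * DD f (1-0) (m+2-0) + e2 * e4 N * DD f 0 (m+1)
      show ((Qh N)^(m+2) - 1) * (aa f (m+2) - aa f (m+1))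
          - Qh N * ((Qh N)^m - 1) * (aa f (m+1) - aa f m)
          = 0 * DD f (1-0) (m+2-0) + e2 * e4 N * aa f (m+1)
      linear_combination hrd
    · -- inductive step
      obtain ⟨m, rfl⟩ : ∃ m, n = r+2+m := ⟨n - (r+2), by omega⟩
      rw [T_step, ih hr (r+2+m) (by omega), ih hr (r+1+m) (by omega)]
      have expand : ∀ i ∈ Finset.range (r+2),
          phi N (r+1) i (r+2+m) * DD f (r+1-i) (r+2+m-i)
          = (if i = 1 then gen N r (r+2+m) * DD f r (r+1+m) else 0)
            + phi N r i (r+2+m) * DD f (r+1-i) (r+2+m-i)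
            + (phi N r (i-1) (r+2+m) - phi N r (i-1) (r+1+m)) * DD f (r+1-i) (r+2+m-i) := by
        intro i _
        rw [phi_succ N r i _ hr, show r+2+m-1 = r+1+m by omega]
        by_cases h1 : i = 1
        · subst h1
          simp only [if_pos]
          rw [show r+1-1 = r by omega, show r+2+m-1 = r+1+m by omega]
          ring
        · simp only [if_neg h1]
          ring
      rw [Finset.sum_congr rfl expand, Finset.sum_add_distrib, Finset.sum_add_distrib,
        Finset.sum_ite_eq' (Finset.range (r+2)) 1]
      rw [if_pos (by simp : (1:ℕ) ∈ Finset.range (r+2))]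
      -- second sum : drop the vanishing top term and split DD
      have s2 : ∑ i ∈ Finset.range (r+2), phi N r i (r+2+m) * DD f (r+1-i) (r+2+m-i)
          = ∑ i ∈ Finset.range (r+1), (phi N r i (r+2+m) * DD f (r-i) (r+2+m-i)
              - phi N r i (r+2+m) * DD f (r-i) (r+1+m-i)) := by
        rw [Finset.sum_range_succ, phi_gt N r (r+1) _ (by omega), zero_mul, add_zero]
        refine Finset.sum_congr rfl fun i hi => ?_
        have hi' : i ≤ r := by simpa [Nat.lt_succ_iff] using hi
        rw [show r+1-i = (r-i)+1 by omega, DD_succ, show r+2+m-i-1 = r+1+m-i by omega]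
        ring
      -- third sum : shift the index
      have s3 : ∑ i ∈ Finset.range (r+2),
            (phi N r (i-1) (r+2+m) - phi N r (i-1) (r+1+m)) * DD f (r+1-i) (r+2+m-i)
          = ∑ i ∈ Finset.range (r+1),
              (phi N r i (r+2+m) * DD f (r-i) (r+1+m-i)
                - phi N r i (r+1+m) * DD f (r-i) (r+1+m-i)) := by
        rw [Finset.sum_range_succ']
        rw [phi_zero_left, phi_zero_left]
        simp only [sub_zero, zero_sub, sub_self, zero_mul, add_zero]
        refine Finset.sum_congr rfl fun i hi => ?_
        rw [show i+1-1 = i by omega, show r+1-(i+1) = r-i by omega,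
          show r+2+m-(i+1) = r+1+m-i by omega]
        ring
      rw [s2, s3, Finset.sum_sub_distrib, Finset.sum_sub_distrib]
      have s1 : ∑ i ∈ Finset.range (r+1), phi N r i (r+1+m) * DD f (r-i) (r+1+m-i)
          = ∑ i ∈ Finset.range (r+1), phi N r i (r+1+m) * DD f (r-i) (r+1+m-i) := rfl
      ring

end Extract

/-! ### valuation bounds for the coefficients `phi` -/

def Dfun (g : ℕ → K) : ℕ → K := fun n => g n - g (n-1)

lemma dfun_iter_add (j : ℕ) (g h : ℕ → K) :
    Dfun^[j] (fun n => g n + h n) = fun n => Dfun^[j] g n + Dfun^[j] h n := by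
  induction j generalizing g h with
  | zero => simp
  | succ j ih =>
      rw [Function.iterate_succ_apply, Function.iterate_succ_apply, Function.iterate_succ_apply]
      have : Dfun (fun n => g n + h n) = fun n => Dfun g n + Dfun h n := by
        funext n; simp [Dfun]; ring
      rw [this, ih]

lemma dfun_iter_sub (j : ℕ) (g h : ℕ → K) :
    Dfun^[j] (fun n => g n - h n) = fun n => Dfun^[j] g n - Dfun^[j] h n := by
  induction j generalizing g h with
  | zero => simp
  | succ j ih =>
      rw [Function.iterate_succ_apply, Function.iterate_succ_apply, Function.iterate_succ_apply]
      have : Dfun (fun n => g n - h n) = fun n => Dfun g n - Dfun h n := by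
        funext n; simp [Dfun]; ring
      rw [this, ih]

lemma dfun_iter_cmul (j : ℕ) (c : K) (g : ℕ → K) :
    Dfun^[j] (fun n => c * g n) = fun n => c * Dfun^[j] g n := by
  induction j generalizing g with
  | zero => simp
  | succ j ih =>
      rw [Function.iterate_succ_apply, Function.iterate_succ_apply]
      have : Dfun (fun n => c * g n) = fun n => c * Dfun g n := by
        funext n; simp [Dfun]; ring
      rw [this, ih]

lemma dfun_iter_zero (j : ℕ) : Dfun^[j] (fun _ => (0:K)) = fun _ => 0 := by
  induction j with
  | zero => simp
  | succ j ih =>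
      rw [Function.iterate_succ_apply]
      have : Dfun (fun _ => (0:K)) = fun _ => 0 := by funext n; simp [Dfun]
      rw [this, ih]

lemma dfun_iter_const (j : ℕ) (hj : 1 ≤ j) (c : K) :
    Dfun^[j] (fun _ => c) = fun _ => 0 := by
  obtain ⟨j', rfl⟩ : ∃ j', j = j' + 1 := ⟨j - 1, by omega⟩
  rw [Function.iterate_succ_apply]
  have : Dfun (fun _ => c) = fun _ => 0 := by funext n; simp [Dfun]
  rw [this, dfun_iter_zero]

lemma powfd (N : ℕ) : ∀ j k n, k + j ≤ n →
    Dfun^[j] (fun m => (Qh N)^(m-k)) n = (Qh N - 1)^j * (Qh N)^(n-k-j) := by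
  intro j
  induction j with
  | zero => intro k n h; simp
  | succ j ih =>
      intro k n h
      rw [Function.iterate_succ_apply']
      show Dfun^[j] (fun m => (Qh N)^(m-k)) n - Dfun^[j] (fun m => (Qh N)^(m-k)) (n-1) = _
      rw [ih k n (by omega), ih k (n-1) (by omega)]
      rw [show n-1-k-j = n-k-(j+1) by omega,
        show n-k-j = (n-k-(j+1)) + 1 by omega, pow_succ, pow_succ]
      ring

lemma gen_fd (N r j n : ℕ) (hN : 1 ≤ N) (h : r+2+j ≤ n) :
    Reg (j+2) (Dfun^[j] (gen N r) n) := by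
  have hgen : gen N r = fun n => (Qh N - 1) *
      ((fun m => (Qh N)^(m-(r+1))) n - (fun m => (Qh N)^(m-1)) n) := rfl
  rw [hgen, dfun_iter_cmul, dfun_iter_sub]
  simp only
  rw [powfd N j (r+1) n (by omega), powfd N j 1 n (by omega)]
  have he : n-1-j = (n-(r+1)-j) + r := by omega
  rw [he, pow_add]
  have key : (Qh N - 1) * ((Qh N - 1)^j * (Qh N)^(n-(r+1)-j)
        - (Qh N - 1)^j * ((Qh N)^(n-(r+1)-j) * (Qh N)^r))
      = ((Qh N - 1)^(j+1) * (Qh N)^(n-(r+1)-j)) * (-((Qh N)^r - 1)) := by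
    rw [pow_succ]; ring
  rw [key]
  have r1 : Reg (j+1) ((Qh N - 1)^(j+1)) := by
    apply reg_pow
    rw [Qh]
    exact reg_qpow_sub_one (2*N)
  have r2 : Reg 0 ((Qh N)^(n-(r+1)-j)) := by
    rw [Qh, ← pow_mul]
    exact reg_qq_pow _
  have r3 : Reg 1 (-((Qh N)^r - 1)) := by
    apply reg_neg
    rw [Qh, ← pow_mul]
    exact reg_qpow_sub_one (2*N*r)
  exact reg_cast (by omega) (reg_mul (reg_mul r1 r2) r3)

lemma ph (N : ℕ) (hN : 1 ≤ N) : ∀ r, 1 ≤ r → ∀ i j n, r+1+j ≤ n →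
    Reg (i+1+j) (Dfun^[j] (phi N r i) n) := by
  intro r
  induction r with
  | zero => omega
  | succ r ih =>
    intro _ i j n hn
    rcases Nat.eq_zero_or_pos r with hr0 | hr
    · -- base case r+1 = 1
      subst hr0
      have hconst : phi N 1 i = fun _ => (if i = 1 then e2 * e4 N else 0) := by
        funext n'; simp [phi]
      rw [hconst]
      rcases Nat.eq_zero_or_pos j with hj0 | hj
      · subst hj0
        simp only [Function.iterate_zero_apply]
        by_cases h1 : i = 1
        · subst h1
          simp only [if_pos]
          have ha : Reg 1 e2 := by
            have h' : e2 = qq^2 - 1 := rfl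
            rw [h']; exact reg_qpow_sub_one 2
          have hb : Reg 1 (e4 N) := by
            have h' : e4 N = qq^(2*N-2) - 1 := rfl
            rw [h']; exact reg_qpow_sub_one (2*N-2)
          have hmul := reg_mul ha hb
          exact reg_cast (by omega) hmul
        · simp only [if_neg h1]
          exact reg_zero _
      · rw [dfun_iter_const j hj]
        exact reg_zero _
    · -- step
      rcases Nat.eq_zero_or_pos i with hi0 | hi
      · subst hi0
        have hcz : phi N (r+1) 0 = fun _ => (0:K) := by
          funext n'; exact phi_zero_left N (r+1) n'
        rw [hcz, dfun_iter_zero]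
        exact reg_zero _
      · have heq : phi N (r+1) i = fun n' =>
            ((fun n'' => if i = 1 then gen N r n'' else 0) n' + phi N r i n')
              + Dfun (phi N r (i-1)) n' := by
          funext n'
          rw [phi_succ N r i n' hr]
          rfl
        rw [heq]
        have split1 := dfun_iter_add j
          (fun n' => (fun n'' => if i = 1 then gen N r n'' else 0) n' + phi N r i n')
          (Dfun (phi N r (i-1)))
        rw [split1]
        have split2 := dfun_iter_add j
          (fun n'' => if i = 1 then gen N r n'' else 0) (phi N r i)
        rw [split2]
        apply reg_add
        apply reg_add
        · -- gen part
          by_cases h1 : i = 1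
          · subst h1
            simp only [if_pos]
            exact reg_cast (by omega) (gen_fd N r j n hN (by omega))
          · simp only [if_neg h1]
            rw [dfun_iter_zero]
            exact reg_zero _
        · exact ih hr i j n (by omega)
        · rw [← Function.iterate_succ_apply]
          exact reg_cast (by omega) (ih hr (i-1) (j+1) n (by omega))


/-! ### main valuation result -/

section Main

variable (N : ℕ) (f : PowerSeries K)

variable (hN : 2 ≤ N)
  (hfun : PowerSeries.rescale ((RatFunc.X : RatFunc ℂ) ^ (2 * N)) f =
      f * ((1 - PowerSeries.C ((RatFunc.X : RatFunc ℂ) ^ 2) *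
              PowerSeries.X) *
           (1 - PowerSeries.C ((RatFunc.X : RatFunc ℂ) ^ (2 * N - 2)) *
              PowerSeries.X) *
           (1 - PowerSeries.X)⁻¹ *
           (1 - PowerSeries.C ((RatFunc.X : RatFunc ℂ) ^ (2 * N)) *
              PowerSeries.X)⁻¹))
  (hf0 : PowerSeries.constantCoeff f = 1)

include hN hfun hf0 in
lemma reg_aa : ∀ n, Reg 0 (aa f n) := by
  intro n
  induction n using Nat.strong_induction_on with
  | _ n IH =>
    match n with
    | 0 => rw [aa_zero f hf0]; exact reg_one
    | 1 =>
        apply reg_div (k := 0) (m := 2*N) (by omega)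
        have h1 : aa f 1 * (qq^(2*N) - 1) = e2 * e4 N := by
          have hb := rec_base N f hN hfun hf0
          have : (Qh N : K) = qq^(2*N) := rfl
          rw [this] at hb
          linear_combination hb
        rw [h1]
        have ha : Reg 1 e2 := by
          have h' : e2 = qq^2 - 1 := rfl
          rw [h']; exact reg_qpow_sub_one 2
        have hb : Reg 1 (e4 N) := by
          have h' : e4 N = qq^(2*N-2) - 1 := rfl
          rw [h']; exact reg_qpow_sub_one (2*N-2)
        exact reg_mono (show (1:ℕ) ≤ 1+1 by norm_num) (reg_mul ha hb)
    | (m+2) =>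
        apply reg_div (k := 0) (m := 2*N*(m+2))
          (Nat.mul_pos (Nat.mul_pos (by norm_num) (by omega)) (by omega))
        have hqm : ∀ j : ℕ, ((Qh N)^j : K) = qq^(2*N*j) := by
          intro j; rw [Qh, ← pow_mul]
        have hp := rec_plain N f hN hfun m
        have h1 : aa f (m+2) * (qq^(2*N*(m+2)) - 1)
            = (((Qh N)^(m+2) - 1) + ((Qh N)^(m+1) - 1) - (q2 - 1) - (q4 N - 1)) * aa f (m+1)
              - Qh N * ((Qh N)^m - 1) * aa f m := by
          rw [← hqm (m+2)]
          linear_combination hp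
        rw [h1]
        apply reg_sub
        · apply reg_cast (show 1 + 0 = 1 by rfl)
          apply reg_mul _ (IH (m+1) (by omega))
          apply reg_sub
          apply reg_sub
          apply reg_add
          · rw [hqm]; exact reg_qpow_sub_one _
          · rw [hqm]; exact reg_qpow_sub_one _
          · have h' : q2 - 1 = qq^2 - 1 := rfl
            rw [h']; exact reg_qpow_sub_one 2
          · have h' : q4 N - 1 = qq^(2*N-2) - 1 := rfl
            rw [h']; exact reg_qpow_sub_one (2*N-2)
        · have hQ0 : Reg 0 (Qh N) := by
            have h' : (Qh N : K) = qq^(2*N) := rfl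
            rw [h']; exact reg_qq_pow _
          have hQ1 : Reg 1 ((Qh N)^m - 1) := by rw [hqm]; exact reg_qpow_sub_one _
          exact reg_cast (by norm_num) (reg_mul (reg_mul hQ0 hQ1) (IH m (by omega)))

include hN hfun hf0 in
lemma main_val : ∀ r, (∀ n, r+1 ≤ n → Reg r (DD f r n)) ∧ Reg (r+1) (DD f r (r+1)) := by
  intro r
  induction r using Nat.strong_induction_on with
  | _ r IH =>
    rcases Nat.eq_zero_or_pos r with hr0 | hr
    · subst hr0
      constructor
      · intro n _
        exact reg_aa N f hN hfun hf0 n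
      · apply reg_div (k := 1) (m := 2*N) (by omega)
        have h1 : DD f 0 1 * (qq^(2*N) - 1) = e2 * e4 N := by
          have hb := rec_base N f hN hfun hf0
          have : (Qh N : K) = qq^(2*N) := rfl
          rw [this] at hb
          show aa f 1 * (qq^(2*N) - 1) = e2 * e4 N
          linear_combination hb
        rw [h1]
        have ha : Reg 1 e2 := by
          have h' : e2 = qq^2 - 1 := rfl
          rw [h']; exact reg_qpow_sub_one 2
        have hb : Reg 1 (e4 N) := by
          have h' : e4 N = qq^(2*N-2) - 1 := rfl
          rw [h']; exact reg_qpow_sub_one (2*N-2)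
        exact reg_cast (by omega) (reg_mul ha hb)
    · -- r ≥ 1
      have hqm : ∀ j : ℕ, ((Qh N)^j : K) = qq^(2*N*j) := by
        intro j; rw [Qh, ← pow_mul]
      -- bound for the sum in `rel`, at superdiagonal and general positions
      have hsum : ∀ n, r+1 ≤ n → Reg (if n = r+1 then r+2 else r+1)
          (∑ i ∈ Finset.range (r+1), phi N r i n * DD f (r-i) (n-i)) := by
        intro n hn
        apply reg_sum
        intro i hi
        have hi' : i ≤ r := by simpa [Nat.lt_succ_iff] using hi
        rcases Nat.eq_zero_or_pos i with hi0 | hipos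
        · subst hi0
          rw [phi_zero_left, zero_mul]
          exact reg_zero _
        · have hphi : Reg (i+1) (phi N r i n) := by
            have h := ph N (by omega) r hr i 0 n (by omega)
            rw [Function.iterate_zero_apply] at h
            exact reg_cast (by omega) h
          by_cases hsup : n = r+1
          · subst hsup
            rw [if_pos rfl, show r+1-i = (r-i)+1 by omega]
            exact reg_cast (by omega) (reg_mul hphi ((IH (r-i) (by omega)).2))
          · have hDD : Reg (r-i) (DD f (r-i) (n-i)) := by
              exact (IH (r-i) (by omega)).1 (n-i) (by omega)
            rw [if_neg hsup]
            exact reg_cast (by omega) (reg_mul hphi hDD)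
      have hsuper : Reg (r+1) (DD f r (r+1)) := by
        apply reg_div (k := r+1) (m := 2*N*(r+1))
          (Nat.mul_pos (Nat.mul_pos (by norm_num) (by omega)) (by omega))
        have h1 : DD f r (r+1) * (qq^(2*N*(r+1)) - 1) = TT N f r (r+1) := by
          rw [TT, Nat.sub_self, pow_zero, sub_self, mul_zero, zero_mul, sub_zero, ← hqm]
          ring
        rw [h1, rel N f hN hfun r hr (r+1) le_rfl]
        have := hsum (r+1) le_rfl
        rwa [if_pos rfl] at this
      refine ⟨?_, hsuper⟩
      intro n hn
      induction n, hn using Nat.le_induction with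
      | base => exact reg_mono (by omega) hsuper
      | succ n hn IHn =>
          -- n+1 ≥ r+2
          apply reg_div (k := r) (m := 2*N*(n+1))
            (Nat.mul_pos (Nat.mul_pos (by norm_num) (by omega)) (by omega))
          have h1 : DD f r (n+1) * (qq^(2*N*(n+1)) - 1)
              = TT N f r (n+1) + Qh N * ((Qh N)^(n+1-(r+1)) - 1) * DD f r n := by
            rw [TT, ← hqm, show n+1-1 = n by omega]
            ring
          rw [h1, rel N f hN hfun r hr (n+1) (by omega)]
          apply reg_add
          · have := hsum (n+1) (by omega)
            rwa [if_neg (by omega)] at this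
          · have hQ0 : Reg 0 (Qh N) := by
              have h' : (Qh N : K) = qq^(2*N) := rfl
              rw [h']; exact reg_qq_pow _
            have hQ1 : Reg 1 ((Qh N)^(n+1-(r+1)) - 1) := by
              rw [hqm]; exact reg_qpow_sub_one _
            exact reg_cast (by omega) (reg_mul (reg_mul hQ0 hQ1) IHn)

end Main

/-! ### Newton forward-difference formula and identification of the coefficients -/

def DS (s : ℕ → K) : ℕ → ℕ → K
  | 0, n => s n
  | r+1, n => DS s r n - DS s r (n-1)

lemma DS_succ (s : ℕ → K) (r n : ℕ) : DS s (r+1) n = DS s r n - DS s r (n-1) := rfl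

lemma DD_eq_DS (f : PowerSeries K) : ∀ r n, DD f r n = DS (aa f) r n := by
  intro r
  induction r with
  | zero => intro n; rfl
  | succ r ih => intro n; rw [DD_succ, DS_succ, ih, ih]

lemma ds_shift (s : ℕ → K) : ∀ k m, k ≤ m →
    DS (fun j => s (j+1) - s j) k (m+1) = DS s (k+1) (m+2) := by
  intro k
  induction k with
  | zero => intro m _; rfl
  | succ k ih =>
      intro m hm
      rw [DS_succ, DS_succ, show (m+1)-1 = (m-1)+1 by omega,
        show (m+2)-1 = (m-1)+2 by omega, ih m (by omega), ih (m-1) (by omega)]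

lemma newton : ∀ n, ∀ s : ℕ → K,
    s (n+1) = ∑ k ∈ Finset.range (n+1), (Nat.choose n k : K) * DS s k (k+1) := by
  intro n
  induction n with
  | zero => intro s; simp; rfl
  | succ n ih =>
      intro s
      have h1 := ih s
      have h2' : s (n+2) - s (n+1)
          = ∑ k ∈ Finset.range (n+1), (Nat.choose n k : K) * DS s (k+1) (k+2) := by
        calc s (n+2) - s (n+1) = (fun j => s (j+1) - s j) (n+1) := rfl
          _ = ∑ k ∈ Finset.range (n+1),
                (Nat.choose n k : K) * DS (fun j => s (j+1) - s j) k (k+1) :=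
              ih (fun j => s (j+1) - s j)
          _ = _ := Finset.sum_congr rfl fun k _ => by rw [ds_shift s k k le_rfl]
      have target_expand : ∑ k ∈ Finset.range (n+2), (Nat.choose (n+1) k : K) * DS s k (k+1)
          = ∑ k ∈ Finset.range (n+1), (Nat.choose (n+1) (k+1) : K) * DS s (k+1) (k+2)
            + (Nat.choose (n+1) 0 : K) * DS s 0 1 :=
        Finset.sum_range_succ' (fun k => (Nat.choose (n+1) k : K) * DS s k (k+1)) (n+1)
      have expand2 : ∑ k ∈ Finset.range (n+1), (Nat.choose (n+1) (k+1) : K) * DS s (k+1) (k+2)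
          = ∑ k ∈ Finset.range (n+1), ((Nat.choose n k : K) * DS s (k+1) (k+2)
              + (Nat.choose n (k+1) : K) * DS s (k+1) (k+2)) := by
        refine Finset.sum_congr rfl fun k _ => ?_
        rw [Nat.choose_succ_succ]
        push_cast
        ring
      have expand34 : ∑ k ∈ Finset.range (n+1), (Nat.choose n (k+1) : K) * DS s (k+1) (k+2)
            + (Nat.choose (n+1) 0 : K) * DS s 0 1
          = ∑ k ∈ Finset.range (n+1), (Nat.choose n k : K) * DS s k (k+1) := by
        have e1 : (Nat.choose (n+1) 0 : K) * DS s 0 1 = (Nat.choose n 0 : K) * DS s 0 1 := by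
          norm_num
        rw [e1, ← Finset.sum_range_succ' (fun k => (Nat.choose n k : K) * DS s k (k+1)) (n+1),
          Finset.sum_range_succ, Nat.choose_succ_self]
        norm_num
      rw [target_expand, expand2, Finset.sum_add_distrib]
      linear_combination h2' + h1 - expand34

section Ident

variable (N : ℕ) (f : PowerSeries K) (c : ℕ → K)

lemma one_sub_X_inv : (1 - PowerSeries.X : PowerSeries K)⁻¹ = PowerSeries.mk 1 := by
  rw [PowerSeries.inv_eq_iff_mul_eq_one (by simp)]
  exact PowerSeries.mk_one_mul_one_sub_eq_one K

lemma coeff_y_pow (k n : ℕ) (hk : 1 ≤ k) (hkn : k ≤ n) :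
    PowerSeries.coeff n ((PowerSeries.X * (1 - PowerSeries.X)⁻¹)^k)
      = (Nat.choose (n-1) (k-1) : K) := by
  obtain ⟨d, rfl⟩ : ∃ d, k = d+1 := ⟨k-1, by omega⟩
  rw [one_sub_X_inv, mul_pow, PowerSeries.mk_one_pow_eq_mk_choose_add]
  obtain ⟨e, rfl⟩ : ∃ e, n = e + (d+1) := ⟨n - (d+1), by omega⟩
  rw [PowerSeries.coeff_X_pow_mul, PowerSeries.coeff_mk]
  have : (d + e).choose d = (e+(d+1)-1).choose ((d+1)-1) := by
    congr 1
    omega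
  rw [this]

variable (hc0 : c 0 = 1)
  (hrep : ∀ n : ℕ, PowerSeries.coeff n f =
      ∑ k ∈ Finset.range (n + 1), c k *
        PowerSeries.coeff n
          ((PowerSeries.X * (1 - PowerSeries.X)⁻¹) ^ k))

include hc0 hrep in
lemma ident : ∀ n, 1 ≤ n → c n = DD f (n-1) n := by
  intro n
  induction n using Nat.strong_induction_on with
  | _ n IH =>
    intro hn
    obtain ⟨m, rfl⟩ : ∃ m, n = m+1 := ⟨n-1, by omega⟩
    -- the representation at m+1 :
    have hr := hrep (m+1)
    have hsplit : ∑ k ∈ Finset.range (m+2), c k *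
          PowerSeries.coeff (m+1) ((PowerSeries.X * (1 - PowerSeries.X)⁻¹) ^ k)
        = ∑ k ∈ Finset.range (m+1), c (k+1) * (Nat.choose m k : K) := by
      rw [Finset.sum_range_succ' (fun k => c k *
        PowerSeries.coeff (m+1) ((PowerSeries.X * (1 - PowerSeries.X)⁻¹) ^ k)) (m+1)]
      have h0 : c 0 * PowerSeries.coeff (m+1)
          ((PowerSeries.X * (1 - PowerSeries.X)⁻¹) ^ 0) = 0 := by
        rw [pow_zero, PowerSeries.coeff_one, if_neg (by omega)]
        ring
      rw [h0, add_zero]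
      refine Finset.sum_congr rfl fun k hk => ?_
      have hk' : k < m+1 := by simpa using hk
      rw [coeff_y_pow (k+1) (m+1) (by omega) (by omega)]
      norm_num
    have hnewt : PowerSeries.coeff (m+1) f
        = ∑ k ∈ Finset.range (m+1), (Nat.choose m k : K) * DD f k (k+1) := by
      have := newton m (aa f)
      rw [show aa f (m+1) = PowerSeries.coeff (m+1) f from rfl] at this
      rw [this]
      exact Finset.sum_congr rfl fun k _ => by rw [DD_eq_DS]
    rw [hsplit] at hr
    -- subtract
    have hzero : ∑ k ∈ Finset.range (m+1),
        (c (k+1) - DD f k (k+1)) * (Nat.choose m k : K) = 0 := by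
      have : ∑ k ∈ Finset.range (m+1), (c (k+1) - DD f k (k+1)) * (Nat.choose m k : K)
          = ∑ k ∈ Finset.range (m+1), c (k+1) * (Nat.choose m k : K)
            - ∑ k ∈ Finset.range (m+1), (Nat.choose m k : K) * DD f k (k+1) := by
        rw [← Finset.sum_sub_distrib]
        exact Finset.sum_congr rfl fun k _ => by ring
      rw [this, ← hr, ← hnewt]
      ring
    rw [Finset.sum_range_succ] at hzero
    have hlow : ∀ k ∈ Finset.range m,
        (c (k+1) - DD f k (k+1)) * (Nat.choose m k : K) = 0 := by
      intro k hk
      have hk' : k < m := by simpa using hk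
      have := IH (k+1) (by omega) (by omega)
      rw [show (k+1)-1 = k by omega] at this
      rw [this]
      ring
    rw [Finset.sum_eq_zero hlow, zero_add, Nat.choose_self, Nat.cast_one, mul_one,
      sub_eq_zero] at hzero
    rw [show m+1-1 = m by omega]
    exact hzero

end Ident

end
end FqReg


/-- Let `f_q ∈ ℂ(q)[[x]]` be the unique power series with constant term `1`
satisfying `f_q(x q^{2N}) = f_q(x) · (1 − xq²)(1 − xq^{2N−2})/((1 − x)(1 − xq^{2N}))`,
and write `f_q(x) = 1 + Σ_{k≥1} c_k (x/(1−x))^k` (the representation being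
encoded coefficientwise: the `n`-th coefficient of `f` is the finite sum
`Σ_{k=0}^{n} c_k · coeff_n ((x(1−x)⁻¹)^k)`, with `c 0 = 1`).  Then for every
`k ≥ 1` the coefficient `c_k` lies in `(q−1)^k · O`, where `O ⊂ ℂ(q)` is the
local ring of rational functions with no pole at `q = 1`; that is, there are
polynomials `a, b` with `b(1) ≠ 0` and `c_k · b = (q−1)^k · a` in `ℂ(q)`. -/
theorem fq_coefficients_regular_at_one (N : ℕ) (hN : 2 ≤ N)
    (f : PowerSeries (RatFunc ℂ)) (c : ℕ → RatFunc ℂ)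
    (hf0 : PowerSeries.constantCoeff f = 1)
    (hfun : PowerSeries.rescale ((RatFunc.X : RatFunc ℂ) ^ (2 * N)) f =
      f * ((1 - PowerSeries.C ((RatFunc.X : RatFunc ℂ) ^ 2) *
              PowerSeries.X) *
           (1 - PowerSeries.C ((RatFunc.X : RatFunc ℂ) ^ (2 * N - 2)) *
              PowerSeries.X) *
           (1 - PowerSeries.X)⁻¹ *
           (1 - PowerSeries.C ((RatFunc.X : RatFunc ℂ) ^ (2 * N)) *
              PowerSeries.X)⁻¹))
    (hc0 : c 0 = 1)
    (hrep : ∀ n : ℕ, PowerSeries.coeff n f =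
      ∑ k ∈ Finset.range (n + 1), c k *
        PowerSeries.coeff n
          ((PowerSeries.X * (1 - PowerSeries.X)⁻¹) ^ k)) :
    ∀ k : ℕ, 1 ≤ k → ∃ a b : Polynomial ℂ,
      Polynomial.eval 1 b ≠ 0 ∧
      c k * algebraMap (Polynomial ℂ) (RatFunc ℂ) b =
        ((RatFunc.X : RatFunc ℂ) - 1) ^ k * algebraMap (Polynomial ℂ) (RatFunc ℂ) a := by
  intro k hk
  have hident := FqReg.ident f c hc0 hrep k hk
  have hval := (FqReg.main_val N f hN hfun hf0 (k-1)).2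
  rw [show (k-1)+1 = k by omega] at hval
  rw [← hident] at hval
  obtain ⟨a, b, hb, h⟩ := hval
  exact ⟨a, b, hb, h⟩
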